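/- arXiv:1308.4296 — 2 statements merged into one kernel-verified Lean document; each statement's English description precedes it below -/
import Mathlib

section
/- Let e = 2 and λ = (a,1^b) with b even, and let T be a domino tableau with basis vector v_T ∈ S_λ. For odd j with 3 ≤ j ≤ n−2 and Ψ_j = ψ_j ψ_{j+1} ψ_{j−1} ψ_j: (1) ψ_1 ψ_2⋯ψ_j Ψ_i v_T = Ψ_i ψ_1⋯ψ_j v_T for all odd i with j+4 ≤ i ≤ n−2; (2) ψ_1⋯ψ_j Ψ_{j+2} v_T = ψ_{j+2} ψ_{j+3} ψ_1⋯ψ_{j+2} v_T; (3) ψ_1⋯ψ_j Ψ_j v_T = −2 ψ_1⋯ψ_j v_T; (4) ψ_1⋯ψ_j Ψ_{j−2} v_T = Ψ_{j−1} ψ_1⋯ψ_j v_T + ψ_j ψ_{j−1} ψ_1⋯ψ_{j−2} v_T; (5) for odd i with 3 ≤ i ≤ j−4, ψ_1⋯ψ_j Ψ_i v_T = Ψ_{i+1} ψ_1⋯ψ_j v_T + ψ_{i+2} ψ_{i+1} ψ_{i+3} ψ_{i+4}⋯ψ_j ψ_1 ψ_2⋯ψ_i v_T. -/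
open scoped BigOperators

def swapSeq (r : ℕ) (i : ℕ → ZMod 2) : ℕ → ZMod 2 :=
  fun k => if k = r then i (r + 1) else if k = r + 1 then i r else i k

/-- The KLR (quiver Hecke) algebra relations of type `A₁⁽¹⁾` (quantum characteristic `e = 2`)
on `n` strands, with generators `y 1, …, y n`, `ψ 1, …, ψ (n-1)` and idempotents `e i`
indexed by residue sequences `i : ℕ → ZMod 2` (positions `1, …, n` are the relevant ones). -/
structure KLR (A : Type*) [Ring A] (n : ℕ) where
  y : ℕ → A
  ψ : ℕ → A
  e : (ℕ → ZMod 2) → A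
  e_idem : ∀ i, e i * e i = e i
  e_orth : ∀ i j, i ≠ j → e i * e j = 0
  y_e : ∀ r i, 1 ≤ r → r ≤ n → y r * e i = e i * y r
  psi_e : ∀ r i, 1 ≤ r → r + 1 ≤ n → ψ r * e i = e (swapSeq r i) * ψ r
  y_comm : ∀ r s, 1 ≤ r → r ≤ n → 1 ≤ s → s ≤ n → y r * y s = y s * y r
  y_psi_comm : ∀ r s, 1 ≤ r → r + 1 ≤ n → 1 ≤ s → s ≤ n → s ≠ r → s ≠ r + 1 →
    y s * ψ r = ψ r * y s
  y_psi_same : ∀ r i, 1 ≤ r → r + 1 ≤ n → i r = i (r + 1) →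
    y r * ψ r * e i = (ψ r * y (r + 1) - 1) * e i
  y_psi_diff : ∀ r i, 1 ≤ r → r + 1 ≤ n → i r ≠ i (r + 1) →
    y r * ψ r * e i = ψ r * y (r + 1) * e i
  y_psi_same' : ∀ r i, 1 ≤ r → r + 1 ≤ n → i r = i (r + 1) →
    y (r + 1) * ψ r * e i = (ψ r * y r + 1) * e i
  y_psi_diff' : ∀ r i, 1 ≤ r → r + 1 ≤ n → i r ≠ i (r + 1) →
    y (r + 1) * ψ r * e i = ψ r * y r * e i
  psi_comm : ∀ r s, 1 ≤ r → r + 1 ≤ n → 1 ≤ s → s + 1 ≤ n → r + 1 < s →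
    ψ s * ψ r = ψ r * ψ s
  psi_sq_same : ∀ r i, 1 ≤ r → r + 1 ≤ n → i r = i (r + 1) → ψ r * ψ r * e i = 0
  psi_sq_diff : ∀ r i, 1 ≤ r → r + 1 ≤ n → i r ≠ i (r + 1) →
    ψ r * ψ r * e i = -((y r - y (r + 1)) ^ 2) * e i
  braid_same : ∀ r i, 1 ≤ r → r + 2 ≤ n → (i r = i (r + 1) ∨ i (r + 1) = i (r + 2)) →
    ψ r * ψ (r + 1) * ψ r * e i = ψ (r + 1) * ψ r * ψ (r + 1) * e i
  braid_diff : ∀ r i, 1 ≤ r → r + 2 ≤ n → i r ≠ i (r + 1) → i (r + 1) ≠ i (r + 2) →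
    ψ r * ψ (r + 1) * ψ r * e i =
      (ψ (r + 1) * ψ r * ψ (r + 1) + y r - 2 * y (r + 1) + y (r + 2)) * e i

variable {A : Type*} [Ring A] {n : ℕ}

/-- `Ψ j = ψ j * ψ (j+1) * ψ (j-1) * ψ j`. -/
def PsiBig (K : KLR A n) (j : ℕ) : A := K.ψ j * K.ψ (j + 1) * K.ψ (j - 1) * K.ψ j

/-- `Ψ↓(x,y) = Ψ x * Ψ (x-2) * ⋯ * Ψ y` (the empty product `1` if `x < y`). -/
def chainD (K : KLR A n) (x y : ℕ) : A :=
  ((List.range ((x + 2 - y) / 2)).map fun k => PsiBig K (x - 2 * k)).prod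

/-- `Ψ↑(x,y) = Ψ x * Ψ (x+2) * ⋯ * Ψ y` (the empty product `1` if `y < x`). -/
def chainU (K : KLR A n) (x y : ℕ) : A :=
  ((List.range ((y + 2 - x) / 2)).map fun k => PsiBig K (x + 2 * k)).prod

/-- `ψ_w` along a word `l` of indices. -/
def psiWord (K : KLR A n) (l : List ℕ) : A := (l.map K.ψ).prod

/-- `ψ x * ψ (x+1) * ⋯ * ψ y`. -/
def ascWord (K : KLR A n) (x y : ℕ) : A :=
  psiWord K ((List.range (y + 1 - x)).map fun t => x + t)

/-- The residue sequence `i_λ` of the initial tableau of the hook `(a, 1^b)` at `e = 2`. -/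
def iLamGen (b : ℕ) : ℕ → ZMod 2 :=
  fun k => if k ≤ b + 1 then (k : ZMod 2) + 1 else (k : ZMod 2) + (b : ZMod 2) + 1

/-- `normProd K base [j₁, …, j_d] = Ψ↓(j₁, base) * Ψ↓(j₂, base+2) * ⋯ * Ψ↓(j_d, base+2(d-1))`. -/
def normProd (K : KLR A n) : ℕ → List ℕ → A
  | _, [] => 1
  | base, j :: rest => chainD K j base * normProd K (base + 2) rest

/-- Valid normal-form data `[j₁ < j₂ < ⋯ < j_d]` for a domino tableau of the hook `(a,1^b)`,
`n = a + b`: all `jᵢ` odd, `b + 3 - 2d + 2i ≤ jᵢ₊₁ ≤ n - 2` (written without truncated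
subtraction). -/
def NormOK (n b : ℕ) (p : List ℕ) : Prop :=
  2 * p.length ≤ b ∧ List.Chain' (· < ·) p ∧
    ∀ i, (h : i < p.length) → Odd (p.get ⟨i, h⟩) ∧
      b + 3 + 2 * i ≤ p.get ⟨i, h⟩ + 2 * p.length ∧ p.get ⟨i, h⟩ + 2 ≤ n

/-- The number `r(T)` of `Ψ` factors in the normal form. -/
def rOf (b : ℕ) (p : List ℕ) : ℕ :=
  ∑ i ∈ Finset.range p.length, (p.getD i 0 + 2 * p.length - (b + 1 + 2 * i)) / 2

/-- `[x, x-1, …, y]` (empty if `x < y`). -/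
def descList (x y : ℕ) : List ℕ := (List.range (x + 1 - y)).map fun t => x - t

/-- The canonical reduced word of the permutation `w_T` for the standard hook tableau with
leg-entry set `L = {l₁ < ⋯ < l_b}`: the concatenation of the descending runs
`[l_k - 1, l_k - 2, …, k + 1]` for `k = 1, …, b`. -/
def tabWord (L : Finset ℕ) : List ℕ :=
  (List.range L.card).flatMap fun k => descList ((L.sort (· ≤ ·)).getD k 0 - 1) (k + 2)

/-- Coxeter length as number of inversions in `{1, …, n}`. -/
def invLen (n : ℕ) (w : Equiv.Perm ℕ) : ℕ :=
  (((Finset.Icc 1 n) ×ˢ (Finset.Icc 1 n)).filter fun p => p.1 < p.2 ∧ w p.2 < w p.1).card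
section Dev

variable {A : Type*} [Ring A] {n : ℕ} {M : Type*} [AddCommGroup M] [Module A M]

/-! ### swapSeq basics -/

lemma swap_at1 (r : ℕ) (i : ℕ → ZMod 2) : swapSeq r i r = i (r + 1) := by
  simp [swapSeq]

lemma swap_at2 (r : ℕ) (i : ℕ → ZMod 2) : swapSeq r i (r + 1) = i r := by
  simp [swapSeq]

lemma swap_other (r k : ℕ) (i : ℕ → ZMod 2) (h1 : k ≠ r) (h2 : k ≠ r + 1) :
    swapSeq r i k = i k := by
  simp [swapSeq, h1, h2]

lemma swap_invol (r : ℕ) (i : ℕ → ZMod 2) : swapSeq r (swapSeq r i) = i := by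
  funext k
  by_cases h1 : k = r
  · subst h1; rw [swap_at1, swap_at2]
  · by_cases h2 : k = r + 1
    · subst h2; rw [swap_at2, swap_at1]
    · rw [swap_other _ _ _ h1 h2, swap_other _ _ _ h1 h2]

/-! ### ZMod 2 casts and iLamGen -/

lemma cast2_even {k : ℕ} (h : Even k) : (k : ZMod 2) = 0 := by
  obtain ⟨c, rfl⟩ := h
  push_cast
  ring_nf
  rw [show ((2:ZMod 2)) = 0 from rfl]
  ring
lemma cast2_odd {k : ℕ} (h : Odd k) : (k : ZMod 2) = 1 := by
  obtain ⟨c, rfl⟩ := h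
  push_cast
  rw [show ((2:ZMod 2)) = 0 from rfl]
  ring

lemma iLam_val (b : ℕ) (hb : Even b) (k : ℕ) : iLamGen b k = (k : ZMod 2) + 1 := by
  unfold iLamGen
  split
  · rfl
  · rw [cast2_even hb]; ring

lemma iLam_even {b k : ℕ} (hb : Even b) (hk : Even k) : iLamGen b k = 1 := by
  rw [iLam_val b hb, cast2_even hk]; ring

lemma iLam_odd {b k : ℕ} (hb : Even b) (hk : Odd k) : iLamGen b k = 0 := by
  rw [iLam_val b hb, cast2_odd hk]
  rw [show ((1:ZMod 2) + 1) = 0 from rfl]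

lemma iLam_shift2 {b : ℕ} (hb : Even b) (k : ℕ) : iLamGen b (k + 2) = iLamGen b k := by
  rw [iLam_val b hb, iLam_val b hb]
  push_cast
  rw [show ((2 : ZMod 2)) = 0 from rfl]
  ring
/-! ### ascWord structure -/

lemma ascWord_nil (K : KLR A n) {x y : ℕ} (h : y < x) : ascWord K x y = 1 := by
  unfold ascWord psiWord
  rw [show y + 1 - x = 0 by omega]
  simp

lemma ascWord_succ (K : KLR A n) {x y : ℕ} (h : x ≤ y + 1) :
    ascWord K x (y + 1) = ascWord K x y * K.ψ (y + 1) := by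
  unfold ascWord psiWord
  rw [show y + 1 + 1 - x = (y + 1 - x) + 1 by omega, List.range_succ]
  simp [show x + (y + 1 - x) = y + 1 by omega]

lemma ascWord_head (K : KLR A n) {x y : ℕ} (h : x ≤ y) :
    ascWord K x y = K.ψ x * ascWord K (x + 1) y := by
  unfold ascWord psiWord
  rw [show y + 1 - x = (y - x) + 1 by omega, List.range_succ_eq_map]
  simp only [List.map_cons, List.map_map, List.prod_cons, add_zero]
  congr 1
  rw [show y + 1 - (x + 1) = y - x by omega]
  apply congrArg
  apply List.map_congr_left
  intro t _
  simp only [Function.comp_apply]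
  congr 1
  omega

lemma ascWord_single (K : KLR A n) (x : ℕ) : ascWord K x x = K.ψ x := by
  unfold ascWord psiWord
  simp [show x + 1 - x = 1 by omega, List.range_succ]
/-! ### commutation lemmas -/

lemma psi_comm_gen (K : KLR A n) {r s : ℕ} (hr : 1 ≤ r) (hrn : r + 1 ≤ n)
    (hs : 1 ≤ s) (hsn : s + 1 ≤ n) (h : r + 2 ≤ s ∨ s + 2 ≤ r) :
    K.ψ r * K.ψ s = K.ψ s * K.ψ r := by
  rcases h with h | h
  · exact (K.psi_comm r s hr hrn hs hsn (by omega)).symm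
  · exact K.psi_comm s r hs hsn hr hrn (by omega)

lemma psi_asc_comm (K : KLR A n) {s x y : ℕ} (hx : 1 ≤ x) (hyn : y + 1 ≤ n)
    (hs : 1 ≤ s) (hsn : s + 1 ≤ n) (h : y + 2 ≤ s ∨ s + 2 ≤ x) :
    K.ψ s * ascWord K x y = ascWord K x y * K.ψ s := by
  suffices H : ∀ D x, 1 ≤ x → (y + 2 ≤ s ∨ s + 2 ≤ x) → y + 1 - x = D →
      K.ψ s * ascWord K x y = ascWord K x y * K.ψ s from H _ x hx h rfl
  intro D
  induction D with
  | zero => intro x hx h hd; rw [ascWord_nil K (by omega), one_mul, mul_one]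
  | succ d ih =>
    intro x hx h hd
    rw [ascWord_head K (by omega : x ≤ y)]
    rw [← mul_assoc, ← psi_comm_gen K hx (by omega) hs hsn (by omega), mul_assoc,
      ih (x + 1) (by omega) (by omega) (by omega), ← mul_assoc]

lemma y_asc_comm (K : KLR A n) {s x y : ℕ} (hx : 1 ≤ x) (hyn : y + 1 ≤ n)
    (hs : 1 ≤ s) (hsn : s ≤ n) (h : y + 1 < s ∨ s < x) :
    K.y s * ascWord K x y = ascWord K x y * K.y s := by
  suffices H : ∀ D x, 1 ≤ x → (y + 1 < s ∨ s < x) → y + 1 - x = D →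
      K.y s * ascWord K x y = ascWord K x y * K.y s from H _ x hx h rfl
  intro D
  induction D with
  | zero => intro x hx h hd; rw [ascWord_nil K (by omega), one_mul, mul_one]
  | succ d ih =>
    intro x hx h hd
    rw [ascWord_head K (by omega : x ≤ y)]
    rw [← mul_assoc, K.y_psi_comm x s hx (by omega) hs hsn (by omega) (by omega),
      mul_assoc, ih (x + 1) (by omega) (by omega) (by omega), ← mul_assoc]

lemma asc_asc_comm (K : KLR A n) {x y c d : ℕ} (hx : 1 ≤ x) (hyn : y + 1 ≤ n)
    (hc : 1 ≤ c) (hdn : d + 1 ≤ n) (h : y + 2 ≤ c) :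
    ascWord K x y * ascWord K c d = ascWord K c d * ascWord K x y := by
  suffices H : ∀ D x, 1 ≤ x → y + 1 - x = D →
      ascWord K x y * ascWord K c d = ascWord K c d * ascWord K x y from H _ x hx rfl
  intro D
  induction D with
  | zero => intro x hx hd; rw [ascWord_nil K (by omega), one_mul, mul_one]
  | succ e ih =>
    intro x hx hd
    by_cases hcd : d < c
    · rw [ascWord_nil K hcd, one_mul, mul_one]
    · rw [ascWord_head K (by omega : x ≤ y), mul_assoc, ih (x + 1) (by omega) (by omega),
        ← mul_assoc, psi_asc_comm K hc hdn hx (by omega) (Or.inr (by omega)), mul_assoc]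

lemma ascWord_append (K : KLR A n) {x m y : ℕ} (h1 : x ≤ m + 1) (h2 : m ≤ y) :
    ascWord K x y = ascWord K x m * ascWord K (m + 1) y := by
  suffices H : ∀ D y, m ≤ y → y - m = D →
      ascWord K x y = ascWord K x m * ascWord K (m + 1) y from H _ y h2 rfl
  intro D
  induction D with
  | zero =>
    intro y hy hd
    rw [show y = m by omega, show ascWord K (m + 1) m = 1 from ascWord_nil K (by omega), mul_one]
  | succ d ih =>
    intro y hy hd
    obtain ⟨y', rfl⟩ : ∃ y', y = y' + 1 := ⟨y - 1, by omega⟩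
    rw [ascWord_succ K (by omega), ascWord_succ K (by omega),
      ih y' (by omega) (by omega), mul_assoc]
/-! ### element-level helpers -/

lemma sm2 {a b : A} {u : M} : a • b • u = (a * b) • u := (mul_smul a b u).symm

lemma pc_smul (K : KLR A n) {r s : ℕ} (hr : 1 ≤ r) (hrn : r + 1 ≤ n)
    (hs : 1 ≤ s) (hsn : s + 1 ≤ n) (h : r + 2 ≤ s ∨ s + 2 ≤ r) (u : M) :
    K.ψ r • K.ψ s • u = K.ψ s • K.ψ r • u := by
  rw [sm2, sm2, psi_comm_gen K hr hrn hs hsn h]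

lemma yc_smul (K : KLR A n) {r s : ℕ} (hr : 1 ≤ r) (hrn : r + 1 ≤ n)
    (hs : 1 ≤ s) (hsn : s ≤ n) (h1 : s ≠ r) (h2 : s ≠ r + 1) (u : M) :
    K.y s • K.ψ r • u = K.ψ r • K.y s • u := by
  rw [sm2, sm2, K.y_psi_comm r s hr hrn hs hsn h1 h2]

/-- push an idempotent through ψ. -/
lemma e_push (K : KLR A n) {r : ℕ} (hr : 1 ≤ r) (hrn : r + 1 ≤ n)
    (κ : ℕ → ZMod 2) (u : M) :
    K.e κ • K.ψ r • u = K.ψ r • K.e (swapSeq r κ) • u := by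
  rw [sm2, sm2]
  congr 1
  have := K.psi_e r (swapSeq r κ) hr hrn
  rw [swap_invol] at this
  exact this.symm

lemma es_psi (K : KLR A n) {κ : ℕ → ZMod 2} {u : M} (h : K.e κ • u = u)
    {r : ℕ} (hr : 1 ≤ r) (hrn : r + 1 ≤ n) :
    K.e (swapSeq r κ) • K.ψ r • u = K.ψ r • u := by
  calc K.e (swapSeq r κ) • K.ψ r • u
      = K.e (swapSeq r κ) • K.ψ r • K.e κ • u := by rw [h]
    _ = ((K.e (swapSeq r κ) * K.ψ r) * K.e κ) • u := by rw [sm2, sm2]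
    _ = ((K.ψ r * K.e κ) * K.e κ) • u := by rw [← K.psi_e r κ hr hrn]
    _ = (K.ψ r * (K.e κ * K.e κ)) • u := by rw [mul_assoc]
    _ = (K.ψ r * K.e κ) • u := by rw [K.e_idem]
    _ = K.ψ r • K.e κ • u := by rw [← sm2]
    _ = K.ψ r • u := by rw [h]

lemma es_y (K : KLR A n) {κ : ℕ → ZMod 2} {u : M} (h : K.e κ • u = u)
    {s : ℕ} (hs : 1 ≤ s) (hsn : s ≤ n) :
    K.e κ • K.y s • u = K.y s • u := by
  calc K.e κ • K.y s • u
      = ((K.e κ * K.y s) * K.e κ) • u := by rw [← h, sm2, sm2, h]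
    _ = ((K.y s * K.e κ) * K.e κ) • u := by rw [K.y_e s κ hs hsn]
    _ = (K.y s * (K.e κ * K.e κ)) • u := by rw [mul_assoc]
    _ = (K.y s * K.e κ) • u := by rw [K.e_idem]
    _ = K.y s • K.e κ • u := by rw [← sm2]
    _ = K.y s • u := by rw [h]

/-! relation wrappers -/

lemma es_sq_same (K : KLR A n) {κ : ℕ → ZMod 2} {u : M} (h : K.e κ • u = u)
    {r : ℕ} (hr : 1 ≤ r) (hrn : r + 1 ≤ n) (hres : κ r = κ (r + 1)) :
    K.ψ r • K.ψ r • u = 0 := by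
  calc K.ψ r • K.ψ r • u
      = (K.ψ r * K.ψ r * K.e κ) • u := by rw [← h, sm2, sm2, h]
    _ = (0 : A) • u := by rw [K.psi_sq_same r κ hr hrn hres]
    _ = 0 := zero_smul A u

lemma es_sq_diff (K : KLR A n) {κ : ℕ → ZMod 2} {u : M} (h : K.e κ • u = u)
    {r : ℕ} (hr : 1 ≤ r) (hrn : r + 1 ≤ n) (hres : κ r ≠ κ (r + 1)) :
    K.ψ r • K.ψ r • u = -((K.y r - K.y (r + 1)) ^ 2) • u := by
  calc K.ψ r • K.ψ r • u
      = (K.ψ r * K.ψ r * K.e κ) • u := by rw [← h, sm2, sm2, h]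
    _ = (-((K.y r - K.y (r + 1)) ^ 2) * K.e κ) • u := by
        rw [K.psi_sq_diff r κ hr hrn hres]
    _ = -((K.y r - K.y (r + 1)) ^ 2) • K.e κ • u := by rw [← sm2]
    _ = -((K.y r - K.y (r + 1)) ^ 2) • u := by rw [h]

lemma es_braid_same (K : KLR A n) {κ : ℕ → ZMod 2} {u : M} (h : K.e κ • u = u)
    {r : ℕ} (hr : 1 ≤ r) (hrn : r + 2 ≤ n)
    (hres : κ r = κ (r + 1) ∨ κ (r + 1) = κ (r + 2)) :
    K.ψ r • K.ψ (r + 1) • K.ψ r • u = K.ψ (r + 1) • K.ψ r • K.ψ (r + 1) • u := by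
  calc K.ψ r • K.ψ (r + 1) • K.ψ r • u
      = (K.ψ r * K.ψ (r + 1) * K.ψ r * K.e κ) • u := by rw [← h, sm2, sm2, sm2, h]
    _ = (K.ψ (r + 1) * K.ψ r * K.ψ (r + 1) * K.e κ) • u := by
        rw [K.braid_same r κ hr hrn hres]
    _ = K.ψ (r + 1) • K.ψ r • K.ψ (r + 1) • K.e κ • u := by rw [sm2, sm2, sm2]
    _ = K.ψ (r + 1) • K.ψ r • K.ψ (r + 1) • u := by rw [h]

lemma es_braid_diff (K : KLR A n) {κ : ℕ → ZMod 2} {u : M} (h : K.e κ • u = u)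
    {r : ℕ} (hr : 1 ≤ r) (hrn : r + 2 ≤ n)
    (hres1 : κ r ≠ κ (r + 1)) (hres2 : κ (r + 1) ≠ κ (r + 2)) :
    K.ψ r • K.ψ (r + 1) • K.ψ r • u =
      K.ψ (r + 1) • K.ψ r • K.ψ (r + 1) • u + K.y r • u
        - (2 : A) • K.y (r + 1) • u + K.y (r + 2) • u := by
  have expand : ((K.ψ (r + 1) * K.ψ r * K.ψ (r + 1) + K.y r - 2 * K.y (r + 1) + K.y (r + 2)) * K.e κ) • u
      = K.ψ (r + 1) • K.ψ r • K.ψ (r + 1) • u + K.y r • u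
        - (2 : A) • K.y (r + 1) • u + K.y (r + 2) • u := by
    have e1 : (K.ψ (r + 1) * K.ψ r * K.ψ (r + 1) * K.e κ) • u
        = K.ψ (r + 1) • K.ψ r • K.ψ (r + 1) • u := by
      rw [mul_smul, h, mul_smul, mul_smul]
    have e2 : (K.y r * K.e κ) • u = K.y r • u := by rw [← sm2, h]
    have e3 : (2 * K.y (r + 1) * K.e κ) • u = (2 : A) • K.y (r + 1) • u := by
      rw [mul_assoc, ← sm2, ← sm2, h]
    have e4 : (K.y (r + 2) * K.e κ) • u = K.y (r + 2) • u := by rw [← sm2, h]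
    rw [add_mul, sub_mul, add_mul, add_smul, sub_smul, add_smul, e1, e2, e3, e4]
  calc K.ψ r • K.ψ (r + 1) • K.ψ r • u
      = (K.ψ r * K.ψ (r + 1) * K.ψ r * K.e κ) • u := by rw [← h, sm2, sm2, sm2, h]
    _ = _ := by rw [K.braid_diff r κ hr hrn hres1 hres2, expand]

lemma es_yps (K : KLR A n) {κ : ℕ → ZMod 2} {u : M} (h : K.e κ • u = u)
    {r : ℕ} (hr : 1 ≤ r) (hrn : r + 1 ≤ n) (hres : κ r = κ (r + 1)) :
    K.y r • K.ψ r • u = K.ψ r • K.y (r + 1) • u - u := by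
  calc K.y r • K.ψ r • u
      = (K.y r * K.ψ r * K.e κ) • u := by rw [← h, sm2, sm2, h]
    _ = ((K.ψ r * K.y (r + 1) - 1) * K.e κ) • u := by rw [K.y_psi_same r κ hr hrn hres]
    _ = K.ψ r • K.y (r + 1) • u - u := by
        rw [sub_mul, sub_smul, one_mul, h, mul_assoc, ← sm2, ← sm2, h]

lemma es_ypd (K : KLR A n) {κ : ℕ → ZMod 2} {u : M} (h : K.e κ • u = u)
    {r : ℕ} (hr : 1 ≤ r) (hrn : r + 1 ≤ n) (hres : κ r ≠ κ (r + 1)) :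
    K.y r • K.ψ r • u = K.ψ r • K.y (r + 1) • u := by
  calc K.y r • K.ψ r • u
      = (K.y r * K.ψ r * K.e κ) • u := by rw [← h, sm2, sm2, h]
    _ = (K.ψ r * K.y (r + 1) * K.e κ) • u := by rw [K.y_psi_diff r κ hr hrn hres]
    _ = K.ψ r • K.y (r + 1) • u := by rw [mul_assoc, ← sm2, ← sm2, h]

lemma es_yps' (K : KLR A n) {κ : ℕ → ZMod 2} {u : M} (h : K.e κ • u = u)
    {r : ℕ} (hr : 1 ≤ r) (hrn : r + 1 ≤ n) (hres : κ r = κ (r + 1)) :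
    K.y (r + 1) • K.ψ r • u = K.ψ r • K.y r • u + u := by
  calc K.y (r + 1) • K.ψ r • u
      = (K.y (r + 1) * K.ψ r * K.e κ) • u := by rw [← h, sm2, sm2, h]
    _ = ((K.ψ r * K.y r + 1) * K.e κ) • u := by rw [K.y_psi_same' r κ hr hrn hres]
    _ = K.ψ r • K.y r • u + u := by
        rw [add_mul, add_smul, one_mul, h, mul_assoc, ← sm2, ← sm2, h]

lemma es_ypd' (K : KLR A n) {κ : ℕ → ZMod 2} {u : M} (h : K.e κ • u = u)
    {r : ℕ} (hr : 1 ≤ r) (hrn : r + 1 ≤ n) (hres : κ r ≠ κ (r + 1)) :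
    K.y (r + 1) • K.ψ r • u = K.ψ r • K.y r • u := by
  calc K.y (r + 1) • K.ψ r • u
      = (K.y (r + 1) * K.ψ r * K.e κ) • u := by rw [← h, sm2, sm2, h]
    _ = (K.ψ r * K.y r * K.e κ) • u := by rw [K.y_psi_diff' r κ hr hrn hres]
    _ = K.ψ r • K.y r • u := by rw [mul_assoc, ← sm2, ← sm2, h]
/-! ### the invariant -/

def InvP (K : KLR A n) (b : ℕ) (u : M) : Prop :=
  K.e (iLamGen b) • u = u ∧
  (∀ k, 1 ≤ k → k ≤ n → K.y k • u = 0) ∧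
  (∀ r, 1 ≤ r → r + 1 ≤ n → Even r → K.ψ r • u = 0)

lemma PsiBig_smul (K : KLR A n) (t : ℕ) (w : M) :
    PsiBig K (t + 1) • w = K.ψ (t + 1) • K.ψ (t + 2) • K.ψ t • K.ψ (t + 1) • w := by
  have : PsiBig K (t + 1) = K.ψ (t + 1) * (K.ψ (t + 2) * (K.ψ t * K.ψ (t + 1))) := by
    unfold PsiBig
    rw [mul_assoc, mul_assoc]
    norm_num
  rw [this, mul_smul, mul_smul, mul_smul]

lemma inv_step {b : ℕ} (hb : Even b) (K : KLR A n) {u : M} (h : InvP K b u)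
    {t : ℕ} (ht : 2 ≤ t) (htn : t + 3 ≤ n) (hte : Even t) :
    InvP K b (PsiBig K (t + 1) • u) := by
  obtain ⟨h0, hy0, hp0⟩ := h
  obtain ⟨c, hc⟩ := hte
  have hte' : Even t := ⟨c, hc⟩
  have het2 : Even (t + 2) := ⟨c + 1, by omega⟩
  have hot1 : Odd (t + 1) := ⟨c, by omega⟩
  have hot3 : Odd (t + 3) := ⟨c + 1, by omega⟩
  have hit : iLamGen b t = 1 := iLam_even hb hte'
  have hit1 : iLamGen b (t + 1) = 0 := iLam_odd hb hot1
  have hit2 : iLamGen b (t + 2) = 1 := iLam_even hb het2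
  have hit3 : iLamGen b (t + 3) = 0 := iLam_odd hb hot3
  -- ES of tails
  have hu1 := es_psi K h0 (r := t + 1) (by omega) (by omega)
  have hu2 := es_psi K hu1 (r := t) (by omega) (by omega)
  have hu12 := es_psi K hu1 (r := t + 2) (by omega) (by omega)
  have hu3 := es_psi K hu2 (r := t + 2) (by omega) (by omega)
  -- κ1 = swapSeq (t+1) i values
  have k1a : swapSeq (t + 1) (iLamGen b) t = 1 :=
    (swap_other (t + 1) t _ (by omega) (by omega)).trans hit
  have k1b : swapSeq (t + 1) (iLamGen b) (t + 1) = 1 :=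
    (swap_at1 (t + 1) _).trans hit2
  have k1c : swapSeq (t + 1) (iLamGen b) (t + 2) = 0 :=
    (swap_at2 (t + 1) _).trans hit1
  have k1d : swapSeq (t + 1) (iLamGen b) (t + 3) = 0 :=
    (swap_other (t + 1) (t + 3) _ (by omega) (by omega)).trans hit3
  -- κ2 = swapSeq t κ1 values
  have k2a : swapSeq t (swapSeq (t + 1) (iLamGen b)) t = 1 :=
    (swap_at1 t _).trans k1b
  have k2b : swapSeq t (swapSeq (t + 1) (iLamGen b)) (t + 1) = 1 :=
    (swap_at2 t _).trans k1a
  have k2c : swapSeq t (swapSeq (t + 1) (iLamGen b)) (t + 2) = 0 :=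
    (swap_other t (t + 2) _ (by omega) (by omega)).trans k1c
  have k2d : swapSeq t (swapSeq (t + 1) (iLamGen b)) (t + 3) = 0 :=
    (swap_other t (t + 3) _ (by omega) (by omega)).trans k1d
  -- κ2' = swapSeq (t+2) κ1 values
  have k2'a : swapSeq (t + 2) (swapSeq (t + 1) (iLamGen b)) t = 1 :=
    (swap_other (t + 2) t _ (by omega) (by omega)).trans k1a
  have k2'b : swapSeq (t + 2) (swapSeq (t + 1) (iLamGen b)) (t + 1) = 1 :=
    (swap_other (t + 2) (t + 1) _ (by omega) (by omega)).trans k1b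
  -- κ3 = swapSeq (t+2) κ2 values
  have k3b : swapSeq (t + 2) (swapSeq t (swapSeq (t + 1) (iLamGen b))) (t + 1) = 1 :=
    (swap_other (t + 2) (t + 1) _ (by omega) (by omega)).trans k2b
  have k3c : swapSeq (t + 2) (swapSeq t (swapSeq (t + 1) (iLamGen b))) (t + 2) = 0 :=
    (swap_at1 (t + 2) _).trans k2d
  -- key braid computations
  have key1 : K.ψ (t + 1) • K.ψ t • K.ψ (t + 1) • u = 0 := by
    have hbd := es_braid_diff K h0 (r := t) (by omega) (by omega)
      (by rw [hit, hit1]; decide) (by rw [hit1, hit2]; decide)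
    rw [hp0 t (by omega) (by omega) hte', smul_zero, smul_zero,
      hy0 t (by omega) (by omega), hy0 (t + 1) (by omega) (by omega),
      hy0 (t + 2) (by omega) (by omega), smul_zero] at hbd
    simpa using hbd.symm
  have key2 : K.ψ (t + 1) • K.ψ (t + 2) • K.ψ (t + 1) • u = 0 := by
    have hbd := es_braid_diff K h0 (r := t + 1) (by omega) (by omega)
      (by rw [hit1, hit2]; decide) (by rw [hit2, hit3]; decide)
    rw [hp0 (t + 2) (by omega) (by omega) het2, smul_zero, smul_zero,
      hy0 (t + 1) (by omega) (by omega), hy0 (t + 2) (by omega) (by omega),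
      hy0 (t + 3) (by omega) (by omega), smul_zero] at hbd
    simpa using hbd
  -- the even-ψ kills
  have Ccm1 : K.ψ t • PsiBig K (t + 1) • u = 0 := by
    rw [PsiBig_smul,
      pc_smul K (r := t + 2) (s := t) (by omega) (by omega) (by omega) (by omega) (by omega),
      es_braid_same K hu12 (r := t) (by omega) (by omega) (Or.inl (by rw [k2'a, k2'b])),
      key2, smul_zero, smul_zero]
  have Ccp1 : K.ψ (t + 2) • PsiBig K (t + 1) • u = 0 := by
    rw [PsiBig_smul,
      (es_braid_same K hu2 (r := t + 1) (by omega) (by omega) (Or.inr (by rw [k2c, k2d]))).symm,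
      key1, smul_zero, smul_zero]
  -- the y kills
  have Cym1 : K.y t • PsiBig K (t + 1) • u = 0 := by
    rw [PsiBig_smul,
      yc_smul K (r := t + 1) (s := t) (by omega) (by omega) (by omega) (by omega) (by omega) (by omega),
      yc_smul K (r := t + 2) (s := t) (by omega) (by omega) (by omega) (by omega) (by omega) (by omega),
      es_yps K hu1 (r := t) (by omega) (by omega) (by rw [k1a, k1b]),
      es_ypd K h0 (r := t + 1) (by omega) (by omega) (by rw [hit1, hit2]; decide),
      hy0 (t + 2) (by omega) (by omega), smul_zero, smul_zero, zero_sub, smul_neg, smul_neg,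
      key2, neg_zero]
  have Cym : K.y (t + 1) • PsiBig K (t + 1) • u = 0 := by
    rw [PsiBig_smul,
      es_ypd K hu3 (r := t + 1) (by omega) (by omega) (by rw [k3b, k3c]; decide),
      es_yps K hu2 (r := t + 2) (by omega) (by omega) (by rw [k2c, k2d]),
      yc_smul K (r := t) (s := t + 3) (by omega) (by omega) (by omega) (by omega) (by omega) (by omega),
      yc_smul K (r := t + 1) (s := t + 3) (by omega) (by omega) (by omega) (by omega) (by omega) (by omega),
      hy0 (t + 3) (by omega) (by omega), smul_zero, smul_zero, smul_zero, zero_sub, smul_neg,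
      key1, neg_zero]
  have Cyp1 : K.y (t + 2) • PsiBig K (t + 1) • u = 0 := by
    rw [PsiBig_smul,
      es_ypd' K hu3 (r := t + 1) (by omega) (by omega) (by rw [k3b, k3c]; decide),
      yc_smul K (r := t + 2) (s := t + 1) (by omega) (by omega) (by omega) (by omega) (by omega) (by omega),
      es_yps' K hu1 (r := t) (by omega) (by omega) (by rw [k1a, k1b]),
      yc_smul K (r := t + 1) (s := t) (by omega) (by omega) (by omega) (by omega) (by omega) (by omega),
      hy0 t (by omega) (by omega), smul_zero, smul_zero, zero_add, key2]
  have Cyp2 : K.y (t + 3) • PsiBig K (t + 1) • u = 0 := by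
    rw [PsiBig_smul,
      yc_smul K (r := t + 1) (s := t + 3) (by omega) (by omega) (by omega) (by omega) (by omega) (by omega),
      es_yps' K hu2 (r := t + 2) (by omega) (by omega) (by rw [k2c, k2d]),
      yc_smul K (r := t) (s := t + 2) (by omega) (by omega) (by omega) (by omega) (by omega) (by omega),
      es_ypd' K h0 (r := t + 1) (by omega) (by omega) (by rw [hit1, hit2]; decide),
      hy0 (t + 1) (by omega) (by omega), smul_zero, smul_zero, smul_zero, zero_add, key1]
  -- e-structure
  have hseq : swapSeq (t + 1) (swapSeq t (swapSeq (t + 2) (swapSeq (t + 1) (iLamGen b)))) =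
      iLamGen b := by
    funext k
    by_cases e1 : k = t
    · rw [e1]
      exact ((swap_other (t + 1) t _ (by omega) (by omega)).trans
        ((swap_at1 t _).trans
          ((swap_other (t + 2) (t + 1) _ (by omega) (by omega)).trans
            (swap_at1 (t + 1) _)))).trans (iLam_shift2 hb t)
    · by_cases e2 : k = t + 1
      · rw [e2]
        exact ((swap_at1 (t + 1) _).trans
          ((swap_other t (t + 2) _ (by omega) (by omega)).trans
            ((swap_at1 (t + 2) _).trans
              (swap_other (t + 1) (t + 3) _ (by omega) (by omega))))).trans
          (iLam_shift2 hb (t + 1))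
      · by_cases e3 : k = t + 2
        · rw [e3]
          exact ((swap_at2 (t + 1) _).trans
            ((swap_at2 t _).trans
              ((swap_other (t + 2) t _ (by omega) (by omega)).trans
                (swap_other (t + 1) t _ (by omega) (by omega))))).trans
            (iLam_shift2 hb t).symm
        · by_cases e4 : k = t + 3
          · rw [e4]
            exact ((swap_other (t + 1) (t + 3) _ (by omega) (by omega)).trans
              ((swap_other t (t + 3) _ (by omega) (by omega)).trans
                ((swap_at2 (t + 2) _).trans
                  (swap_at2 (t + 1) _)))).trans (iLam_shift2 hb (t + 1)).symm
          · exact (swap_other (t + 1) k _ (by omega) (by omega)).trans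
              ((swap_other t k _ (by omega) (by omega)).trans
                ((swap_other (t + 2) k _ (by omega) (by omega)).trans
                  (swap_other (t + 1) k _ (by omega) (by omega))))
  have hE : K.e (iLamGen b) • PsiBig K (t + 1) • u = PsiBig K (t + 1) • u := by
    rw [PsiBig_smul,
      e_push K (r := t + 1) (by omega) (by omega),
      e_push K (r := t + 2) (by omega) (by omega),
      e_push K (r := t) (by omega) (by omega),
      e_push K (r := t + 1) (by omega) (by omega),
      hseq, h0]
  refine ⟨hE, ?_, ?_⟩
  · intro k hk1 hkn
    by_cases e1 : k = t
    · rw [e1]; exact Cym1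
    by_cases e2 : k = t + 1
    · rw [e2]; exact Cym
    by_cases e3 : k = t + 2
    · rw [e3]; exact Cyp1
    by_cases e4 : k = t + 3
    · rw [e4]; exact Cyp2
    rw [PsiBig_smul,
      yc_smul K (r := t + 1) (s := k) (by omega) (by omega) (by omega) (by omega) (by omega) (by omega),
      yc_smul K (r := t + 2) (s := k) (by omega) (by omega) (by omega) (by omega) (by omega) (by omega),
      yc_smul K (r := t) (s := k) (by omega) (by omega) (by omega) (by omega) (by omega) (by omega),
      yc_smul K (r := t + 1) (s := k) (by omega) (by omega) (by omega) (by omega) (by omega) (by omega),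
      hy0 k hk1 hkn, smul_zero, smul_zero, smul_zero, smul_zero]
  · intro r hr1 hrn hre
    by_cases e1 : r = t
    · rw [e1]; exact Ccm1
    by_cases e2 : r = t + 2
    · rw [e2]; exact Ccp1
    obtain ⟨c2, hc2⟩ := hre
    rw [PsiBig_smul,
      pc_smul K (r := r) (s := t + 1) hr1 hrn (by omega) (by omega) (by omega),
      pc_smul K (r := r) (s := t + 2) hr1 hrn (by omega) (by omega) (by omega),
      pc_smul K (r := r) (s := t) hr1 hrn (by omega) (by omega) (by omega),
      pc_smul K (r := r) (s := t + 1) hr1 hrn (by omega) (by omega) (by omega),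
      hp0 r hr1 hrn ⟨c2, hc2⟩, smul_zero, smul_zero, smul_zero, smul_zero]
/-! ### invariance for normal words -/

lemma chainD_head (K : KLR A n) {x y c : ℕ} (hx : 2 ≤ x) (h : (x + 2 - y) / 2 = c + 1) :
    chainD K x y = PsiBig K x * chainD K (x - 2) y := by
  unfold chainD
  rw [h, show (x - 2 + 2 - y) / 2 = c by omega, List.range_succ_eq_map]
  simp only [List.map_cons, List.map_map, List.prod_cons, Nat.mul_zero, Nat.sub_zero]
  congr 1
  apply congrArg
  apply List.map_congr_left
  intro k _
  simp only [Function.comp_apply]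
  congr 1
  omega

lemma inv_chainD {b : ℕ} (hb : Even b) (K : KLR A n) {u : M} (h : InvP K b u)
    {x y : ℕ} (hval : ∀ k, k < (x + 2 - y) / 2 → Odd (x - 2 * k) ∧ 3 ≤ x - 2 * k ∧ x - 2 * k + 2 ≤ n) :
    InvP K b (chainD K x y • u) := by
  suffices H : ∀ c x, (x + 2 - y) / 2 = c →
      (∀ k, k < (x + 2 - y) / 2 → Odd (x - 2 * k) ∧ 3 ≤ x - 2 * k ∧ x - 2 * k + 2 ≤ n) →
      InvP K b (chainD K x y • u) from H _ x rfl hval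
  intro c
  induction c with
  | zero =>
    intro x hc _
    unfold chainD
    rw [hc]
    simpa using h
  | succ c ih =>
    intro x hc hval
    have hx0 := hval 0 (by omega)
    obtain ⟨ho, h3, hn2⟩ := hx0
    rw [Nat.mul_zero, Nat.sub_zero] at ho h3 hn2
    obtain ⟨t, rfl⟩ : ∃ t, x = t + 1 := ⟨x - 1, by omega⟩
    rw [chainD_head K (by omega) hc, mul_smul]
    have hinner : InvP K b (chainD K (t + 1 - 2) y • u) := by
      apply ih
      · omega
      · intro k hk
        have := hval (k + 1) (by omega)
        constructor
        · have h1 := this.1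
          rw [show t + 1 - 2 * (k + 1) = t + 1 - 2 - 2 * k by omega] at h1
          exact h1
        constructor
        · have h2 := this.2.1
          omega
        · have h3 := this.2.2
          omega
    have hodd : Even t := by
      obtain ⟨m, hm⟩ := ho
      exact ⟨m, by omega⟩
    exact inv_step hb K hinner (by omega) (by omega) hodd

lemma inv_normProd {b : ℕ} (hb : Even b) (K : KLR A n) {u : M} (h : InvP K b u)
    {p : List ℕ} {B : ℕ} (hB3 : 3 ≤ B) (hBo : Odd B)
    (hent : ∀ j ∈ p, Odd j ∧ j + 2 ≤ n) :
    InvP K b (normProd K B p • u) := by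
  induction p generalizing B u with
  | nil => unfold normProd; simpa using h
  | cons j rest ih =>
    have : normProd K B (j :: rest) = chainD K j B * normProd K (B + 2) rest := rfl
    rw [this, mul_smul]
    have hinner : InvP K b (normProd K (B + 2) rest • u) :=
      ih h (by omega) (by obtain ⟨m, hm⟩ := hBo; exact ⟨m + 1, by omega⟩)
        (fun j hj => hent j (List.mem_cons_of_mem _ hj))
    apply inv_chainD hb K hinner
    intro k hk
    have hj := hent j List.mem_cons_self
    obtain ⟨hjo, hjn⟩ := hj
    obtain ⟨m, hm⟩ := hjo
    obtain ⟨mB, hmB⟩ := hBo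
    refine ⟨⟨m - k, by omega⟩, by omega, by omega⟩
/-! ### residue sequence of an ascending word -/

def gSeq (x y : ℕ) (κ : ℕ → ZMod 2) : ℕ → ZMod 2 :=
  fun k => if k = x then κ (y + 1) else if x + 1 ≤ k ∧ k ≤ y + 1 then κ (k - 1) else κ k

lemma gSeq_lt {x y k : ℕ} (κ : ℕ → ZMod 2) (h : k < x) : gSeq x y κ k = κ k := by
  simp only [gSeq]
  rw [if_neg (by omega), if_neg (by omega)]

lemma gSeq_at {x y : ℕ} (κ : ℕ → ZMod 2) : gSeq x y κ x = κ (y + 1) := by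
  simp [gSeq]

lemma gSeq_gt {x y k : ℕ} (κ : ℕ → ZMod 2) (hx : x ≤ y + 1) (h : y + 1 < k) : gSeq x y κ k = κ k := by
  simp only [gSeq]
  rw [if_neg (by omega), if_neg (by omega)]

lemma es_asc (K : KLR A n) {κ : ℕ → ZMod 2} {w : M} (h : K.e κ • w = w)
    {x y : ℕ} (hx : 1 ≤ x) (hyn : y + 1 ≤ n) (hxy : x ≤ y + 1) :
    K.e (gSeq x y κ) • (ascWord K x y • w) = ascWord K x y • w := by
  suffices H : ∀ D x, 1 ≤ x → x ≤ y + 1 → y + 1 - x = D →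
      K.e (gSeq x y κ) • (ascWord K x y • w) = ascWord K x y • w from H _ x hx hxy rfl
  intro D
  induction D with
  | zero =>
    intro x hx1 hxy1 hD
    have hxy2 : x = y + 1 := by omega
    have hg : gSeq x y κ = κ := by
      funext k
      simp only [gSeq]
      by_cases hk : k = x
      · rw [if_pos hk, hk, hxy2]
      · rw [if_neg hk, if_neg (by omega)]
    rw [hg, ascWord_nil K (by omega), one_smul, h]
  | succ D ih =>
    intro x hx1 hxy1 hD
    rw [ascWord_head K (by omega : x ≤ y), mul_smul]
    have hin := ih (x + 1) (by omega) (by omega) (by omega)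
    have := es_psi K hin (r := x) (by omega) (by omega)
    have hg : swapSeq x (gSeq (x + 1) y κ) = gSeq x y κ := by
      funext k
      by_cases h1 : k = x
      · rw [h1, swap_at1, gSeq_at, gSeq_at]
      · by_cases h2 : k = x + 1
        · rw [h2, swap_at2, gSeq_lt κ (by omega)]
          simp only [gSeq]
          rw [if_neg (by omega), if_pos (by omega)]
          norm_num
        · rw [swap_other x k _ h1 h2]
          simp only [gSeq]
          rw [if_neg h1, if_neg (by omega)]
          by_cases h3 : x + 1 + 1 ≤ k ∧ k ≤ y + 1
          · rw [if_pos h3, if_pos (by omega)]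
          · rw [if_neg h3, if_neg (by omega)]
    rw [hg] at this
    exact this
lemma asc_psi_smul (K : KLR A n) {s x y : ℕ} (hx : 1 ≤ x) (hyn : y + 1 ≤ n)
    (hs : 1 ≤ s) (hsn : s + 1 ≤ n) (h : y + 2 ≤ s ∨ s + 2 ≤ x) (w : M) :
    ascWord K x y • (K.ψ s • w) = K.ψ s • (ascWord K x y • w) := by
  rw [sm2, ← psi_asc_comm K hx hyn hs hsn h, ← sm2]

lemma G4 (K : KLR A n) {u : M} {κ : ℕ → ZMod 2} {d : ℕ}
    (hd1 : 1 ≤ d) (hdn : d + 5 ≤ n)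
    (hes : K.e κ • u = u)
    (h1 : κ (d + 1) = 1) (h2 : κ (d + 2) = 0) (h3 : κ (d + 3) = 1)
    (h4 : κ (d + 4) = 0) (h5 : κ (d + 5) = 1)
    (hy1 : K.y (d + 1) • u = 0) (hy2 : K.y (d + 4) • u = 0) :
    ascWord K 1 (d + 4) • (PsiBig K (d + 2) • u) =
      PsiBig K (d + 3) • (ascWord K 1 (d + 4) • u) +
        K.ψ (d + 4) • K.ψ (d + 3) • (ascWord K 1 (d + 2) • u) := by
  -- word decompositions
  have hPsiq : ∀ w : M, PsiBig K (d + 2) • w =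
      K.ψ (d + 2) • K.ψ (d + 3) • K.ψ (d + 1) • K.ψ (d + 2) • w :=
    fun w => PsiBig_smul K (d + 1) w
  have hPsiq1 : ∀ w : M, PsiBig K (d + 3) • w =
      K.ψ (d + 3) • K.ψ (d + 4) • K.ψ (d + 2) • K.ψ (d + 3) • w :=
    fun w => PsiBig_smul K (d + 2) w
  have hA1 : ascWord K 1 (d + 1) = ascWord K 1 d * K.ψ (d + 1) := ascWord_succ K (by omega)
  have hA2 : ascWord K 1 (d + 2) = ascWord K 1 (d + 1) * K.ψ (d + 2) := ascWord_succ K (by omega)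
  have hA3 : ascWord K 1 (d + 3) = ascWord K 1 (d + 2) * K.ψ (d + 3) := ascWord_succ K (by omega)
  have hA4 : ascWord K 1 (d + 4) = ascWord K 1 (d + 3) * K.ψ (d + 4) := ascWord_succ K (by omega)
  have hasc3 : ∀ X : M, ascWord K 1 (d + 4) • X =
      ascWord K 1 (d + 1) • K.ψ (d + 2) • K.ψ (d + 3) • K.ψ (d + 4) • X := by
    intro X
    rw [hA4, hA3, hA2, mul_smul, mul_smul, mul_smul]
  have hasc2 : ∀ X : M, ascWord K 1 (d + 2) • X = ascWord K 1 (d + 1) • K.ψ (d + 2) • X := by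
    intro X
    rw [hA2, mul_smul]
  have hascd1 : ∀ X : M, ascWord K 1 (d + 1) • X = ascWord K 1 d • K.ψ (d + 1) • X := by
    intro X
    rw [hA1, mul_smul]
  have hasc4 : ∀ X : M, ascWord K 1 (d + 4) • X =
      ascWord K 1 d • K.ψ (d + 1) • K.ψ (d + 2) • K.ψ (d + 3) • K.ψ (d + 4) • X := by
    intro X
    rw [hA4, hA3, hA2, hA1, mul_smul, mul_smul, mul_smul, mul_smul]
  -- ES chains
  have hv1 := es_psi K hes (r := d + 2) (by omega) (by omega)
  have hv2 := es_psi K hv1 (r := d + 3) (by omega) (by omega)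
  have hv3 := es_psi K hv2 (r := d + 4) (by omega) (by omega)
  have hv4 := es_psi K hv3 (r := d + 1) (by omega) (by omega)
  have hq4 := es_psi K hes (r := d + 4) (by omega) (by omega)
  have hq42 := es_psi K hq4 (r := d + 2) (by omega) (by omega)
  have hqZ := es_psi K hq42 (r := d + 3) (by omega) (by omega)
  have hsq := es_psi K hv1 (r := d + 4) (by omega) (by omega)
  have hyE := es_y K hes (s := d + 5) (by omega) (by omega)
  have hr1 := es_psi K hyE (r := d + 2) (by omega) (by omega)
  have hr2 := es_psi K hr1 (r := d + 3) (by omega) (by omega)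
  have hr3 := es_psi K hr2 (r := d + 4) (by omega) (by omega)
  -- residue values
  have n1a : swapSeq (d + 2) κ (d + 3) = 0 := (swap_at2 (d + 2) _).trans h2
  have n1b : swapSeq (d + 2) κ (d + 4) = 0 :=
    (swap_other (d + 2) (d + 4) _ (by omega) (by omega)).trans h4
  have n2a : swapSeq (d + 3) (swapSeq (d + 2) κ) (d + 4) = 0 :=
    (swap_at2 (d + 3) _).trans ((swap_at2 (d + 2) _).trans h2)
  have n2b : swapSeq (d + 3) (swapSeq (d + 2) κ) (d + 5) = 1 :=
    (swap_other (d + 3) (d + 5) _ (by omega) (by omega)).trans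
      ((swap_other (d + 2) (d + 5) _ (by omega) (by omega)).trans h5)
  have m3a : swapSeq (d + 4) (swapSeq (d + 3) (swapSeq (d + 2) κ)) (d + 1) = 1 :=
    (swap_other (d + 4) (d + 1) _ (by omega) (by omega)).trans
      ((swap_other (d + 3) (d + 1) _ (by omega) (by omega)).trans
        ((swap_other (d + 2) (d + 1) _ (by omega) (by omega)).trans h1))
  have m3b : swapSeq (d + 4) (swapSeq (d + 3) (swapSeq (d + 2) κ)) (d + 2) = 1 :=
    (swap_other (d + 4) (d + 2) _ (by omega) (by omega)).trans
      ((swap_other (d + 3) (d + 2) _ (by omega) (by omega)).trans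
        ((swap_at1 (d + 2) _).trans h3))
  have kw1 : swapSeq (d + 1) (swapSeq (d + 4) (swapSeq (d + 3) (swapSeq (d + 2) κ))) (d + 2) = 1 :=
    (swap_at2 (d + 1) _).trans m3a
  have kw2 : swapSeq (d + 1) (swapSeq (d + 4) (swapSeq (d + 3) (swapSeq (d + 2) κ))) (d + 3) = 0 :=
    (swap_other (d + 1) (d + 3) _ (by omega) (by omega)).trans
      ((swap_other (d + 4) (d + 3) _ (by omega) (by omega)).trans
        ((swap_at1 (d + 3) _).trans
          ((swap_other (d + 2) (d + 4) _ (by omega) (by omega)).trans h4)))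
  have kw3 : swapSeq (d + 1) (swapSeq (d + 4) (swapSeq (d + 3) (swapSeq (d + 2) κ))) (d + 4) = 1 :=
    (swap_other (d + 1) (d + 4) _ (by omega) (by omega)).trans
      ((swap_at1 (d + 4) _).trans
        ((swap_other (d + 3) (d + 5) _ (by omega) (by omega)).trans
          ((swap_other (d + 2) (d + 5) _ (by omega) (by omega)).trans h5)))
  have z1 : swapSeq (d + 3) (swapSeq (d + 2) (swapSeq (d + 4) κ)) (d + 1) = 1 :=
    (swap_other (d + 3) (d + 1) _ (by omega) (by omega)).trans
      ((swap_other (d + 2) (d + 1) _ (by omega) (by omega)).trans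
        ((swap_other (d + 4) (d + 1) _ (by omega) (by omega)).trans h1))
  have z2 : swapSeq (d + 3) (swapSeq (d + 2) (swapSeq (d + 4) κ)) (d + 2) = 1 :=
    (swap_other (d + 3) (d + 2) _ (by omega) (by omega)).trans
      ((swap_at1 (d + 2) _).trans
        ((swap_other (d + 4) (d + 3) _ (by omega) (by omega)).trans h3))
  have f1 : swapSeq (d + 4) κ (d + 3) = 1 :=
    (swap_other (d + 4) (d + 3) _ (by omega) (by omega)).trans h3
  have f2 : swapSeq (d + 4) κ (d + 4) = 1 := (swap_at1 (d + 4) _).trans h5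
  have p1 : swapSeq (d + 4) (swapSeq (d + 2) κ) (d + 1) = 1 :=
    (swap_other (d + 4) (d + 1) _ (by omega) (by omega)).trans
      ((swap_other (d + 2) (d + 1) _ (by omega) (by omega)).trans h1)
  have p2 : swapSeq (d + 4) (swapSeq (d + 2) κ) (d + 2) = 1 :=
    (swap_other (d + 4) (d + 2) _ (by omega) (by omega)).trans
      ((swap_at1 (d + 2) _).trans h3)
  -- y-term computations
  have hY1 : K.y (d + 2) • K.ψ (d + 1) • K.ψ (d + 4) • K.ψ (d + 3) • K.ψ (d + 2) • u =
      K.ψ (d + 4) • K.ψ (d + 3) • K.ψ (d + 2) • u := by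
    rw [es_yps' K hv3 (r := d + 1) (by omega) (by omega) (by rw [m3a, m3b]),
      yc_smul K (r := d + 4) (s := d + 1) (by omega) (by omega) (by omega) (by omega) (by omega) (by omega),
      yc_smul K (r := d + 3) (s := d + 1) (by omega) (by omega) (by omega) (by omega) (by omega) (by omega),
      yc_smul K (r := d + 2) (s := d + 1) (by omega) (by omega) (by omega) (by omega) (by omega) (by omega),
      hy1, smul_zero, smul_zero, smul_zero, smul_zero, zero_add]
  have hY2 : K.y (d + 3) • K.ψ (d + 1) • K.ψ (d + 4) • K.ψ (d + 3) • K.ψ (d + 2) • u =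
      -(K.ψ (d + 1) • K.ψ (d + 4) • K.ψ (d + 2) • u) := by
    rw [yc_smul K (r := d + 1) (s := d + 3) (by omega) (by omega) (by omega) (by omega) (by omega) (by omega),
      yc_smul K (r := d + 4) (s := d + 3) (by omega) (by omega) (by omega) (by omega) (by omega) (by omega),
      es_yps K hv1 (r := d + 3) (by omega) (by omega) (by rw [n1a, n1b]),
      yc_smul K (r := d + 2) (s := d + 4) (by omega) (by omega) (by omega) (by omega) (by omega) (by omega),
      hy2, smul_zero, smul_zero, zero_sub, smul_neg, smul_neg]
  have hY3 : K.y (d + 4) • K.ψ (d + 1) • K.ψ (d + 4) • K.ψ (d + 3) • K.ψ (d + 2) • u =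
      K.ψ (d + 1) • K.ψ (d + 4) • K.ψ (d + 3) • K.ψ (d + 2) • K.y (d + 5) • u := by
    rw [yc_smul K (r := d + 1) (s := d + 4) (by omega) (by omega) (by omega) (by omega) (by omega) (by omega),
      es_ypd K hv2 (r := d + 4) (by omega) (by omega) (by rw [n2a, n2b]; decide),
      yc_smul K (r := d + 3) (s := d + 5) (by omega) (by omega) (by omega) (by omega) (by omega) (by omega),
      yc_smul K (r := d + 2) (s := d + 5) (by omega) (by omega) (by omega) (by omega) (by omega) (by omega)]
  -- vanishing of the correction terms
  have hP : ascWord K 1 (d + 1) • K.ψ (d + 1) • K.ψ (d + 4) • K.ψ (d + 2) • u = 0 := by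
    rw [hascd1, es_sq_same K hsq (r := d + 1) (by omega) (by omega) (by rw [p1, p2]), smul_zero]
  have h2P : ascWord K 1 (d + 1) • (2 : A) • K.ψ (d + 1) • K.ψ (d + 4) • K.ψ (d + 2) • u = 0 := by
    rw [sm2, show ascWord K 1 (d + 1) * (2 : A) = (2 : A) * ascWord K 1 (d + 1) from by
      rw [two_mul, mul_two], ← sm2, hP, smul_zero]
  have hR : ascWord K 1 (d + 1) •
      K.ψ (d + 1) • K.ψ (d + 4) • K.ψ (d + 3) • K.ψ (d + 2) • K.y (d + 5) • u = 0 := by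
    rw [hascd1, es_sq_same K hr3 (r := d + 1) (by omega) (by omega) (by rw [m3a, m3b]), smul_zero]
  have hT2 : ascWord K 1 (d + 1) • K.ψ (d + 4) • K.ψ (d + 3) • K.ψ (d + 2) • u =
      K.ψ (d + 4) • K.ψ (d + 3) • (ascWord K 1 (d + 2) • u) := by
    rw [asc_psi_smul K (by omega) (by omega) (by omega) (by omega) (by omega),
      asc_psi_smul K (by omega) (by omega) (by omega) (by omega) (by omega),
      hasc2]
  -- the braid part
  have hB : ascWord K 1 (d + 1) •
        K.ψ (d + 3) • K.ψ (d + 2) • K.ψ (d + 3) •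
          K.ψ (d + 1) • K.ψ (d + 4) • K.ψ (d + 3) • K.ψ (d + 2) • u =
      PsiBig K (d + 3) • (ascWord K 1 (d + 4) • u) := by
    rw [pc_smul K (r := d + 3) (s := d + 1) (by omega) (by omega) (by omega) (by omega) (by omega),
      es_braid_same K hv1 (r := d + 3) (by omega) (by omega) (Or.inl (by rw [n1a, n1b])),
      pc_smul K (r := d + 4) (s := d + 2) (by omega) (by omega) (by omega) (by omega) (by omega),
      pc_smul K (r := d + 1) (s := d + 4) (by omega) (by omega) (by omega) (by omega) (by omega),
      pc_smul K (r := d + 2) (s := d + 4) (by omega) (by omega) (by omega) (by omega) (by omega),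
      asc_psi_smul K (by omega) (by omega) (by omega) (by omega) (by omega),
      asc_psi_smul K (by omega) (by omega) (by omega) (by omega) (by omega),
      hascd1,
      es_braid_same K hqZ (r := d + 1) (by omega) (by omega) (Or.inl (by rw [z1, z2])),
      es_braid_same K hq4 (r := d + 2) (by omega) (by omega) (Or.inr (by rw [f1, f2])),
      hPsiq1, hasc4,
      ← asc_psi_smul K (by omega) (by omega) (by omega) (by omega) (by omega :
        d + 2 ≤ d + 3 ∨ d + 3 + 2 ≤ 1),
      ← asc_psi_smul K (by omega) (by omega) (by omega) (by omega) (by omega :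
        d + 2 ≤ d + 2 ∨ d + 2 + 2 ≤ 1),
      pc_smul K (r := d + 3) (s := d + 1) (by omega) (by omega) (by omega) (by omega) (by omega)]
  -- main computation
  rw [hPsiq, hasc3,
    pc_smul K (r := d + 4) (s := d + 2) (by omega) (by omega) (by omega) (by omega) (by omega),
    pc_smul K (r := d + 3) (s := d + 1) (by omega) (by omega) (by omega) (by omega) (by omega),
    pc_smul K (r := d + 4) (s := d + 1) (by omega) (by omega) (by omega) (by omega) (by omega),
    es_braid_diff K hv4 (r := d + 2) (by omega) (by omega)
      (by rw [kw1, kw2]; decide) (by rw [kw2, kw3]; decide),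
    hY1, hY2, hY3, smul_neg, sub_neg_eq_add,
    smul_add, smul_add, smul_add,
    hB, hT2, h2P, hR, add_zero, add_zero]
lemma y_asc_smul (K : KLR A n) {s x y : ℕ} (hx : 1 ≤ x) (hyn : y + 1 ≤ n)
    (hs : 1 ≤ s) (hsn : s ≤ n) (h : y + 1 < s ∨ s < x) (w : M) :
    K.y s • (ascWord K x y • w) = ascWord K x y • (K.y s • w) := by
  rw [sm2, y_asc_comm K hx hyn hs hsn h, ← sm2]

lemma asc_asc_smul (K : KLR A n) {x y c e : ℕ} (hx : 1 ≤ x) (hyn : y + 1 ≤ n)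
    (hc : 1 ≤ c) (hen : e + 1 ≤ n) (h : y + 2 ≤ c) (w : M) :
    ascWord K c e • (ascWord K x y • w) = ascWord K x y • (ascWord K c e • w) := by
  rw [sm2, ← asc_asc_comm K hx hyn hc hen h, ← sm2]

end Dev

/-- `e = 2`, `λ = (a, 1^b)` with `b` even, `T` a domino tableau with basis
vector `v_T` (in normal form, given by the data `p`).  For odd `j` with `3 ≤ j ≤ n - 2`,
writing `ψ_1 ⋯ ψ_j = ascWord K 1 j`:
(1) `ψ_1⋯ψ_j Ψ_i v_T = Ψ_i ψ_1⋯ψ_j v_T` for odd `i` with `j + 4 ≤ i ≤ n - 2`;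
(2) `ψ_1⋯ψ_j Ψ_{j+2} v_T = ψ_{j+2} ψ_{j+3} ψ_1⋯ψ_{j+2} v_T`;
(3) `ψ_1⋯ψ_j Ψ_j v_T = -2 ψ_1⋯ψ_j v_T`;
(4) `ψ_1⋯ψ_j Ψ_{j-2} v_T = Ψ_{j-1} ψ_1⋯ψ_j v_T + ψ_j ψ_{j-1} ψ_1⋯ψ_{j-2} v_T`;
(5) for odd `i` with `3 ≤ i ≤ j - 4`,
`ψ_1⋯ψ_j Ψ_i v_T = Ψ_{i+1} ψ_1⋯ψ_j v_T + ψ_{i+2} ψ_{i+1} ψ_{i+3} ψ_{i+4}⋯ψ_j ψ_1⋯ψ_i v_T`. -/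
theorem specht_hook_domino_garnir_commutation {M : Type*} [AddCommGroup M] [Module A M]
    (a b : ℕ) (hn : n = a + b) (ha : 1 ≤ a) (hb : Even b)
    (K : KLR A n) (z : M)
    (hy : ∀ k, 1 ≤ k → k ≤ n → K.y k • z = 0)
    (he1 : K.e (iLamGen b) • z = z)
    (he2 : ∀ i, i ≠ iLamGen b → K.e i • z = 0)
    (hpsiz : ∀ j, 1 ≤ j → j + 1 ≤ n → j ≠ b + 1 → K.ψ j • z = 0)
    (hgar : ascWord K 1 (b + 1) • z = 0)
    (p : List ℕ) (hp : NormOK n b p)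
    (v : M) (hv : v = normProd K (b + 3 - 2 * p.length) p • z)
    (j : ℕ) (hjodd : Odd j) (hj3 : 3 ≤ j) (hjn : j + 2 ≤ n) :
    (∀ i, Odd i → j + 4 ≤ i → i + 2 ≤ n →
        ascWord K 1 j • (PsiBig K i • v) = PsiBig K i • (ascWord K 1 j • v)) ∧
    (j + 4 ≤ n → ascWord K 1 j • (PsiBig K (j + 2) • v) =
        (K.ψ (j + 2) * K.ψ (j + 3)) • (ascWord K 1 (j + 2) • v)) ∧
    (ascWord K 1 j • (PsiBig K j • v) = (-2 : ℤ) • (ascWord K 1 j • v)) ∧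
    (5 ≤ j → ascWord K 1 j • (PsiBig K (j - 2) • v) =
        PsiBig K (j - 1) • (ascWord K 1 j • v) +
          (K.ψ j * K.ψ (j - 1)) • (ascWord K 1 (j - 2) • v)) ∧
    (∀ i, Odd i → 3 ≤ i → i + 4 ≤ j →
        ascWord K 1 j • (PsiBig K i • v) =
          PsiBig K (i + 1) • (ascWord K 1 j • v) +
            (K.ψ (i + 2) * K.ψ (i + 1) * ascWord K (i + 3) j) • (ascWord K 1 i • v)) := by
  obtain ⟨cb, hcb⟩ := hb
  have hb' : Even b := ⟨cb, hcb⟩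
  -- the invariant for v
  have hz : InvP K b z := by
    refine ⟨he1, hy, ?_⟩
    intro r h1 h2 hre
    obtain ⟨cr, hcr⟩ := hre
    exact hpsiz r h1 h2 (by omega)
  have h2L : 2 * p.length ≤ b := hp.1
  have hInv : InvP K b v := by
    rw [hv]
    refine inv_normProd hb' K hz (by omega) ⟨(b - 2 * p.length) / 2 + 1, by omega⟩ ?_
    intro j' hj'
    obtain ⟨⟨idx, hidx⟩, rfl⟩ := List.mem_iff_get.mp hj'
    have := hp.2.2 idx hidx
    exact ⟨this.1, this.2.2⟩
  obtain ⟨hIe, hIy, hIpsi⟩ := hInv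
  obtain ⟨cj, hcj⟩ := hjodd
  refine ⟨?_, ?_, ?_, ?_, ?_⟩
  -- (1)
  · intro i hio hi4 hin
    obtain ⟨s, rfl⟩ : ∃ s, i = s + 1 := ⟨i - 1, by omega⟩
    rw [PsiBig_smul K s, PsiBig_smul K s,
      asc_psi_smul K (by omega) (by omega) (by omega) (by omega) (by omega),
      asc_psi_smul K (by omega) (by omega) (by omega) (by omega) (by omega),
      asc_psi_smul K (by omega) (by omega) (by omega) (by omega) (by omega),
      asc_psi_smul K (by omega) (by omega) (by omega) (by omega) (by omega)]
  -- (2)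
  · intro h4n
    rw [PsiBig_smul K (j + 1),
      asc_psi_smul K (by omega) (by omega) (by omega) (by omega) (by omega),
      asc_psi_smul K (by omega) (by omega) (by omega) (by omega) (by omega),
      mul_smul,
      ascWord_succ K (x := 1) (y := j + 1) (by omega),
      ascWord_succ K (x := 1) (y := j) (by omega),
      mul_smul, mul_smul]
  -- (3)
  · obtain ⟨t, rfl⟩ : ∃ t, j = t + 1 := ⟨j - 1, by omega⟩
    have hte : Even t := ⟨cj, by omega⟩
    have hit : iLamGen b t = 1 := iLam_even hb' hte
    have hit1 : iLamGen b (t + 1) = 0 := iLam_odd hb' ⟨cj, by omega⟩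
    have hit2 : iLamGen b (t + 2) = 1 := iLam_even hb' ⟨cj + 1, by omega⟩
    have hit3 : iLamGen b (t + 3) = 0 := iLam_odd hb' ⟨cj + 1, by omega⟩
    have hw1 := es_psi K hIe (r := t + 1) (by omega) (by omega)
    have hw2 := es_psi K hw1 (r := t) (by omega) (by omega)
    have hw3 := es_psi K hw2 (r := t + 2) (by omega) (by omega)
    have k1a : swapSeq (t + 1) (iLamGen b) t = 1 :=
      (swap_other (t + 1) t _ (by omega) (by omega)).trans hit
    have k1b : swapSeq (t + 1) (iLamGen b) (t + 1) = 1 := (swap_at1 (t + 1) _).trans hit2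
    have k1c : swapSeq (t + 1) (iLamGen b) (t + 2) = 0 := (swap_at2 (t + 1) _).trans hit1
    have k1d : swapSeq (t + 1) (iLamGen b) (t + 3) = 0 :=
      (swap_other (t + 1) (t + 3) _ (by omega) (by omega)).trans hit3
    have k2c : swapSeq t (swapSeq (t + 1) (iLamGen b)) (t + 2) = 0 :=
      (swap_other t (t + 2) _ (by omega) (by omega)).trans k1c
    have k2d : swapSeq t (swapSeq (t + 1) (iLamGen b)) (t + 3) = 0 :=
      (swap_other t (t + 3) _ (by omega) (by omega)).trans k1d
    have k3b : swapSeq (t + 2) (swapSeq t (swapSeq (t + 1) (iLamGen b))) (t + 1) = 1 :=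
      (swap_other (t + 2) (t + 1) _ (by omega) (by omega)).trans
        ((swap_at2 t _).trans k1a)
    have k3c : swapSeq (t + 2) (swapSeq t (swapSeq (t + 1) (iLamGen b))) (t + 2) = 0 :=
      (swap_at1 (t + 2) _).trans k2d
    have hasc : ∀ X : M, ascWord K 1 (t + 1) • X = ascWord K 1 t • K.ψ (t + 1) • X := by
      intro X
      rw [ascWord_succ K (x := 1) (y := t) (by omega), mul_smul]
    have b1 : K.y (t + 1) • K.ψ (t + 2) • K.ψ t • K.ψ (t + 1) • v =
        K.ψ (t + 2) • K.ψ (t + 1) • v := by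
      rw [yc_smul K (r := t + 2) (s := t + 1) (by omega) (by omega) (by omega) (by omega) (by omega) (by omega),
        es_yps' K hw1 (r := t) (by omega) (by omega) (by rw [k1a, k1b]),
        yc_smul K (r := t + 1) (s := t) (by omega) (by omega) (by omega) (by omega) (by omega) (by omega),
        hIy t (by omega) (by omega), smul_zero, smul_zero, zero_add]
    have b2 : K.y (t + 2) • K.ψ (t + 2) • K.ψ t • K.ψ (t + 1) • v =
        -(K.ψ t • K.ψ (t + 1) • v) := by
      rw [es_yps K hw2 (r := t + 2) (by omega) (by omega) (by rw [k2c, k2d]),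
        yc_smul K (r := t) (s := t + 3) (by omega) (by omega) (by omega) (by omega) (by omega) (by omega),
        yc_smul K (r := t + 1) (s := t + 3) (by omega) (by omega) (by omega) (by omega) (by omega) (by omega),
        hIy (t + 3) (by omega) (by omega), smul_zero, smul_zero, smul_zero, zero_sub]
    have a1 : K.y (t + 1) • K.ψ (t + 2) • K.ψ (t + 1) • v = 0 := by
      rw [yc_smul K (r := t + 2) (s := t + 1) (by omega) (by omega) (by omega) (by omega) (by omega) (by omega),
        es_ypd K hIe (r := t + 1) (by omega) (by omega) (by rw [hit1, hit2]; decide),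
        hIy (t + 2) (by omega) (by omega), smul_zero, smul_zero]
    have a2 : K.y (t + 2) • K.ψ (t + 2) • K.ψ (t + 1) • v = -(K.ψ (t + 1) • v) := by
      rw [es_yps K hw1 (r := t + 2) (by omega) (by omega) (by rw [k1c, k1d]),
        yc_smul K (r := t + 1) (s := t + 3) (by omega) (by omega) (by omega) (by omega) (by omega) (by omega),
        hIy (t + 3) (by omega) (by omega), smul_zero, smul_zero, zero_sub]
    have a3 : K.y (t + 1) • K.ψ t • K.ψ (t + 1) • v = K.ψ (t + 1) • v := by
      rw [es_yps' K hw1 (r := t) (by omega) (by omega) (by rw [k1a, k1b]),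
        yc_smul K (r := t + 1) (s := t) (by omega) (by omega) (by omega) (by omega) (by omega) (by omega),
        hIy t (by omega) (by omega), smul_zero, smul_zero, zero_add]
    have a4 : K.y (t + 2) • K.ψ t • K.ψ (t + 1) • v = 0 := by
      rw [yc_smul K (r := t) (s := t + 2) (by omega) (by omega) (by omega) (by omega) (by omega) (by omega),
        es_ypd' K hIe (r := t + 1) (by omega) (by omega) (by rw [hit1, hit2]; decide),
        hIy (t + 1) (by omega) (by omega), smul_zero, smul_zero]
    have hW1 : (K.y (t + 1) - K.y (t + 2)) • K.ψ (t + 2) • K.ψ t • K.ψ (t + 1) • v =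
        K.ψ (t + 2) • K.ψ (t + 1) • v + K.ψ t • K.ψ (t + 1) • v := by
      rw [sub_smul, b1, b2, sub_neg_eq_add]
    have hW2 : ((K.y (t + 1) - K.y (t + 2)) ^ 2) • K.ψ (t + 2) • K.ψ t • K.ψ (t + 1) • v =
        K.ψ (t + 1) • v + K.ψ (t + 1) • v := by
      rw [pow_two, mul_smul, hW1, smul_add, sub_smul, sub_smul, a1, a2, a3, a4,
        zero_sub, neg_neg, sub_zero]
    rw [PsiBig_smul K t, hasc, hasc,
      es_sq_diff K hw3 (r := t + 1) (by omega) (by omega) (by rw [k3b, k3c]; decide),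
      neg_smul, hW2, smul_neg, smul_add,
      show (-2 : ℤ) = -(2 : ℤ) from rfl, neg_smul, two_smul]
  -- (4)
  · intro hj5
    obtain ⟨d, rfl⟩ : ∃ d, j = d + 4 := ⟨j - 4, by omega⟩
    have hdo : Odd d := ⟨cj - 2, by omega⟩
    obtain ⟨cd, hcd⟩ := hdo
    simp only [show d + 4 - 2 = d + 2 from by omega, show d + 4 - 1 = d + 3 from by omega]
    rw [mul_smul]
    exact G4 K (by omega) (by omega) hIe
      (iLam_even hb' ⟨cd + 1, by omega⟩) (iLam_odd hb' ⟨cd + 1, by omega⟩)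
      (iLam_even hb' ⟨cd + 2, by omega⟩) (iLam_odd hb' ⟨cd + 2, by omega⟩)
      (iLam_even hb' ⟨cd + 3, by omega⟩)
      (hIy (d + 1) (by omega) (by omega)) (hIy (d + 4) (by omega) (by omega))
  -- (5)
  · intro i hio hi3 hij
    obtain ⟨d, rfl⟩ : ∃ d, i = d + 2 := ⟨i - 2, by omega⟩
    obtain ⟨cd, hcd⟩ := hio
    have hdo : Odd d := ⟨cd - 1, by omega⟩
    -- u := ascWord K (d+5) j • v
    have hesu := es_asc K hIe (x := d + 5) (y := j) (by omega) (by omega) (by omega)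
    have hg1 : gSeq (d + 5) j (iLamGen b) (d + 1) = 1 :=
      (gSeq_lt _ (by omega)).trans (iLam_even hb' ⟨cd, by omega⟩)
    have hg2 : gSeq (d + 5) j (iLamGen b) (d + 2) = 0 :=
      (gSeq_lt _ (by omega)).trans (iLam_odd hb' ⟨cd, by omega⟩)
    have hg3 : gSeq (d + 5) j (iLamGen b) (d + 3) = 1 :=
      (gSeq_lt _ (by omega)).trans (iLam_even hb' ⟨cd + 1, by omega⟩)
    have hg4 : gSeq (d + 5) j (iLamGen b) (d + 4) = 0 :=
      (gSeq_lt _ (by omega)).trans (iLam_odd hb' ⟨cd + 1, by omega⟩)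
    have hg5 : gSeq (d + 5) j (iLamGen b) (d + 5) = 1 :=
      (gSeq_at _).trans (iLam_even hb' ⟨cj + 1, by omega⟩)
    have hyu1 : K.y (d + 1) • (ascWord K (d + 5) j • v) = 0 := by
      rw [y_asc_smul K (by omega) (by omega) (by omega) (by omega) (by omega),
        hIy (d + 1) (by omega) (by omega), smul_zero]
    have hyu2 : K.y (d + 4) • (ascWord K (d + 5) j • v) = 0 := by
      rw [y_asc_smul K (by omega) (by omega) (by omega) (by omega) (by omega),
        hIy (d + 4) (by omega) (by omega), smul_zero]
    have hG := G4 K (d := d) (by omega) (by omega) hesu hg1 hg2 hg3 hg4 hg5 hyu1 hyu2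
    have ecomm : ascWord K (d + 5) j • (PsiBig K (d + 2) • v) =
        PsiBig K (d + 2) • (ascWord K (d + 5) j • v) := by
      rw [PsiBig_smul K (d + 1), PsiBig_smul K (d + 1),
        asc_psi_smul K (s := d + 2) (x := d + 5) (y := j) (by omega) (by omega) (by omega) (by omega) (by omega),
        asc_psi_smul K (s := d + 3) (x := d + 5) (y := j) (by omega) (by omega) (by omega) (by omega) (by omega),
        asc_psi_smul K (s := d + 1) (x := d + 5) (y := j) (by omega) (by omega) (by omega) (by omega) (by omega),
        asc_psi_smul K (s := d + 2) (x := d + 5) (y := j) (by omega) (by omega) (by omega) (by omega) (by omega)]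
    have e1 : ascWord K 1 j • (PsiBig K (d + 2) • v) =
        ascWord K 1 (d + 4) • (PsiBig K (d + 2) • (ascWord K (d + 5) j • v)) := by
      rw [ascWord_append K (x := 1) (m := d + 4) (y := j) (by omega) (by omega), mul_smul, ecomm]
    have e2 : ascWord K 1 j • v = ascWord K 1 (d + 4) • (ascWord K (d + 5) j • v) := by
      rw [ascWord_append K (x := 1) (m := d + 4) (y := j) (by omega) (by omega), mul_smul]
    have e3 : (K.ψ (d + 4) * K.ψ (d + 3) * ascWord K (d + 5) j) • (ascWord K 1 (d + 2) • v) =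
        K.ψ (d + 4) • K.ψ (d + 3) • (ascWord K 1 (d + 2) • (ascWord K (d + 5) j • v)) := by
      rw [mul_smul, mul_smul,
        asc_asc_smul K (x := 1) (y := d + 2) (c := d + 5) (e := j) (by omega) (by omega) (by omega) (by omega) (by omega)]
    rw [e1, e2, e3]
    exact hG
end

section
/- Let λ = (a,1^b) be a hook partition of n and T a standard λ-tableau. If i lies in the leg of T and i+1 lies in the arm (1 < i < n), then w_T^{-1}(i) < w_T^{-1}(i+1), and consequently ℓ(s_i w_T) = ℓ(w_T) + 1; i.e., prepending s_i to any reduced expression of w_T gives a reduced expression of s_i w_T. -/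
lemma swap_lt_iff (i x y : ℕ) (h1 : ¬(x = i ∧ y = i + 1)) (h2 : ¬(x = i + 1 ∧ y = i)) :
    Equiv.swap i (i + 1) x < Equiv.swap i (i + 1) y ↔ x < y := by
  simp only [Equiv.swap_apply_def]
  split_ifs <;> omega

/-- let `λ = (a, 1^b)` be a hook partition of `n = a + b` and `T` a standard
`λ`-tableau, encoded by the permutation `w = w_T` of `{1, …, n}` with `w_T T_λ = T` (so
`w 1 = 1`, `w` is increasing on the leg positions `{2, …, b+1}` and on the arm positions
`{b+2, …, n}`, and fixes everything outside `{1, …, n}`).  If `i` lies in the leg of `T`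
(i.e. `2 ≤ w⁻¹ i ≤ b + 1`) and `i + 1` lies in the arm (i.e. `b + 2 ≤ w⁻¹ (i+1) ≤ n`), for
`1 < i < n`, then `w⁻¹ i < w⁻¹ (i+1)` and `ℓ(s_i w) = ℓ(w) + 1`. -/
theorem hook_tableau_length_add_one (n a b : ℕ) (hn : n = a + b) (ha : 1 ≤ a) (hb : 1 ≤ b)
    (w : Equiv.Perm ℕ)
    (hwfix : ∀ m, m = 0 ∨ n < m → w m = m) (hw1 : w 1 = 1)
    (hleg : ∀ p q, 2 ≤ p → p < q → q ≤ b + 1 → w p < w q)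
    (harm : ∀ p q, b + 2 ≤ p → p < q → q ≤ n → w p < w q)
    (i : ℕ) (hi1 : 1 < i) (hin : i < n)
    (hileg : 2 ≤ w.symm i ∧ w.symm i ≤ b + 1)
    (hiarm : b + 2 ≤ w.symm (i + 1) ∧ w.symm (i + 1) ≤ n) :
    w.symm i < w.symm (i + 1) ∧
      invLen n (Equiv.swap i (i + 1) * w) = invLen n w + 1 := by
  set P := w.symm i with hP
  set Q := w.symm (i + 1) with hQ
  have hPQ : P < Q := by omega
  refine ⟨hPQ, ?_⟩
  have hwP : w P = i := w.apply_symm_apply i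
  have hwQ : w Q = i + 1 := w.apply_symm_apply (i + 1)
  have hPn : P ≤ n := by omega
  have hQn : Q ≤ n := hiarm.2
  unfold invLen
  have hset :
      (((Finset.Icc 1 n) ×ˢ (Finset.Icc 1 n)).filter
        fun p => p.1 < p.2 ∧ (Equiv.swap i (i + 1) * w) p.2 < (Equiv.swap i (i + 1) * w) p.1)
      = insert (P, Q)
        (((Finset.Icc 1 n) ×ˢ (Finset.Icc 1 n)).filter
          fun p => p.1 < p.2 ∧ w p.2 < w p.1) := by
    ext ⟨p, q⟩
    rw [Finset.mem_filter, Finset.mem_insert, Finset.mem_filter]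
    simp only [Finset.mem_filter, Finset.mem_product, Finset.mem_insert, Finset.mem_Icc,
      Equiv.Perm.mul_apply, Prod.mk.injEq]
    constructor
    · rintro ⟨⟨hp, hq⟩, hpq, hinv⟩
      by_cases hcase : p = P ∧ q = Q
      · exact Or.inl hcase
      · right
        refine ⟨⟨hp, hq⟩, hpq, ?_⟩
        rw [swap_lt_iff i (w q) (w p) ?_ ?_] at hinv
        · exact hinv
        · rintro ⟨h1, h2⟩
          have : q = P := by rw [hP, ← h1, Equiv.symm_apply_apply]
          have : p = Q := by rw [hQ, ← h2, Equiv.symm_apply_apply]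
          omega
        · rintro ⟨h1, h2⟩
          have hq' : q = Q := by rw [hQ, ← h1, Equiv.symm_apply_apply]
          have hp' : p = P := by rw [hP, ← h2, Equiv.symm_apply_apply]
          exact hcase ⟨hp', hq'⟩
    · rintro (⟨hp, hq⟩ | ⟨⟨hp, hq⟩, hpq, hinv⟩)
      · subst hp; subst hq
        refine ⟨⟨⟨by omega, hPn⟩, ⟨by omega, hQn⟩⟩, hPQ, ?_⟩
        rw [hwP, hwQ, Equiv.swap_apply_left, Equiv.swap_apply_right]
        omega
      · refine ⟨⟨hp, hq⟩, hpq, ?_⟩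
        rw [swap_lt_iff i (w q) (w p) ?_ ?_]
        · exact hinv
        · rintro ⟨h1, h2⟩
          have hq' : q = P := by rw [hP, ← h1, Equiv.symm_apply_apply]
          have hp' : p = Q := by rw [hQ, ← h2, Equiv.symm_apply_apply]
          omega
        · rintro ⟨h1, h2⟩
          have hq' : q = Q := by rw [hQ, ← h1, Equiv.symm_apply_apply]
          have hp' : p = P := by rw [hP, ← h2, Equiv.symm_apply_apply]
          omega
  rw [hset, Finset.card_insert_of_notMem]
  simp only [Finset.mem_filter, Finset.mem_product, Finset.mem_Icc, not_and]
  intro _ _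
  rw [hwP, hwQ]
  omega
end
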